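/- Let I ⊆ S be an ideal that is homogeneous with respect to the standard grading of S by total degree, and let f₁, …, f_d be nonzero elements of S. If in_ω(f₁), …, in_ω(f_d) is a regular sequence on the S-module S/in_ω(I), then f₁, …, f_d is a regular sequence on the S-module S/I. -/

import Mathlib

open Finset MvPolynomial

/-- The `ω`-initial form `in_ω(g)` of a polynomial `g`: the sum of the terms of `g` whose
monomials have maximal `ω`-weight (for `g ≠ 0` this weight is `deg_ω(g)`). -/
noncomputable def initialForm {K σ : Type} [Field K] (ω : σ → ℤ)
    (g : MvPolynomial σ K) : MvPolynomial σ K :=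
  ∑ u ∈ g.support.filter
      (fun u => ∀ u' ∈ g.support, Finsupp.weight ω u' ≤ Finsupp.weight ω u),
    monomial u (coeff u g)

/-- The initial ideal `in_ω(I)`, generated by the initial forms of the nonzero
elements of `I`. -/
noncomputable def initialIdeal {K σ : Type} [Field K] (ω : σ → ℤ)
    (I : Ideal (MvPolynomial σ K)) : Ideal (MvPolynomial σ K) :=
  Ideal.span {p | ∃ g ∈ I, g ≠ 0 ∧ p = initialForm ω g}

namespace InW

variable {K σ : Type} [Field K] (ω : σ → ℤ)

/-- top weight of a polynomial (junk value 0 for 0) -/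
noncomputable def wdeg (g : MvPolynomial σ K) : ℤ :=
  if h : g.support.Nonempty then g.support.sup' h (Finsupp.weight ω) else 0

variable {ω}

lemma le_wdeg {g : MvPolynomial σ K} {u : σ →₀ ℕ} (hu : u ∈ g.support) :
    Finsupp.weight ω u ≤ wdeg ω g := by
  have h : g.support.Nonempty := ⟨u, hu⟩
  rw [wdeg, dif_pos h]
  exact Finset.le_sup' _ hu

lemma coeff_eq_zero_of_wdeg_lt {g : MvPolynomial σ K} {u : σ →₀ ℕ}
    (h : wdeg ω g < Finsupp.weight ω u) : coeff u g = 0 := by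
  by_contra hc
  exact absurd (le_wdeg (by simpa using hc)) (not_le.mpr h)

lemma exists_wdeg {g : MvPolynomial σ K} (hg : g ≠ 0) :
    ∃ u ∈ g.support, Finsupp.weight ω u = wdeg ω g := by
  have h : g.support.Nonempty := support_nonempty.mpr hg
  obtain ⟨u, hu, he⟩ := Finset.exists_mem_eq_sup' h (Finsupp.weight ω)
  refine ⟨u, hu, ?_⟩
  rw [wdeg, dif_pos h, he]

lemma initialForm_eq (g : MvPolynomial σ K) :
    initialForm ω g = weightedHomogeneousComponent ω (wdeg ω g) g := by
  classical
  rcases eq_or_ne g 0 with rfl | hg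
  · rw [map_zero, initialForm]
    rw [support_zero]
    rfl
  rw [initialForm, weightedHomogeneousComponent_apply]
  congr 1
  apply Finset.filter_congr
  intro u hu
  constructor
  · intro hall
    refine le_antisymm (le_wdeg hu) ?_
    obtain ⟨v, hv, hve⟩ := exists_wdeg (ω := ω) hg
    exact hve ▸ hall v hv
  · intro h1 u' hu'
    exact h1 ▸ le_wdeg hu'

lemma isWeightedHomogeneous_initialForm (g : MvPolynomial σ K) :
    IsWeightedHomogeneous ω (initialForm ω g) (wdeg ω g) := by
  rw [initialForm_eq]
  exact weightedHomogeneousComponent_isWeightedHomogeneous _ _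

lemma coeff_initialForm_of_weight_eq {g : MvPolynomial σ K} {u : σ →₀ ℕ}
    (h : Finsupp.weight ω u = wdeg ω g) :
    coeff u (initialForm ω g) = coeff u g := by
  classical
  rw [initialForm_eq, coeff_weightedHomogeneousComponent, if_pos h]

lemma initialForm_ne_zero {g : MvPolynomial σ K} (hg : g ≠ 0) :
    initialForm ω g ≠ 0 := by
  obtain ⟨u, hu, he⟩ := exists_wdeg (ω := ω) hg
  intro hc
  have := coeff_initialForm_of_weight_eq (g := g) (u := u) he
  rw [hc, coeff_zero] at this
  exact (mem_support_iff.mp hu) this.symm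

lemma wdeg_eq_of_isWeightedHomogeneous {g : MvPolynomial σ K} {m : ℤ}
    (hg : g ≠ 0) (h : IsWeightedHomogeneous ω g m) : wdeg ω g = m := by
  obtain ⟨u, hu, he⟩ := exists_wdeg (ω := ω) hg
  rw [← he, h (mem_support_iff.mp hu)]

lemma initialForm_of_isWeightedHomogeneous {g : MvPolynomial σ K} {m : ℤ}
    (h : IsWeightedHomogeneous ω g m) : initialForm ω g = g := by
  rcases eq_or_ne g 0 with rfl | hg
  · rw [initialForm_eq, map_zero]
  rw [initialForm_eq, wdeg_eq_of_isWeightedHomogeneous hg h,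
    h.weightedHomogeneousComponent_same]

lemma initialForm_one : initialForm ω (1 : MvPolynomial σ K) = 1 :=
  initialForm_of_isWeightedHomogeneous (isWeightedHomogeneous_one K ω)

lemma coeff_initialForm_of_weight_ne {g : MvPolynomial σ K} {u : σ →₀ ℕ}
    (h : Finsupp.weight ω u ≠ wdeg ω g) :
    coeff u (initialForm ω g) = 0 := by
  by_contra hc
  exact h (isWeightedHomogeneous_initialForm g hc)

lemma wdeg_le {g : MvPolynomial σ K} {m : ℤ} (hg : g ≠ 0)
    (h : ∀ u, coeff u g ≠ 0 → Finsupp.weight ω u ≤ m) : wdeg ω g ≤ m := by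
  obtain ⟨u, hu, he⟩ := exists_wdeg (ω := ω) hg
  exact he ▸ h u (mem_support_iff.mp hu)

lemma coeff_mul_eq_zero {p q : MvPolynomial σ K} {a b : ℤ}
    (hp : ∀ v, coeff v p ≠ 0 → Finsupp.weight ω v ≤ a)
    (hq : ∀ w, coeff w q ≠ 0 → Finsupp.weight ω w ≤ b)
    {u : σ →₀ ℕ} (hu : a + b < Finsupp.weight ω u) : coeff u (p * q) = 0 := by
  classical
  rw [coeff_mul]
  apply Finset.sum_eq_zero
  rintro ⟨v, w⟩ hvw
  rw [Finset.HasAntidiagonal.mem_antidiagonal] at hvw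
  by_cases h1 : coeff v p = 0
  · rw [h1, zero_mul]
  by_cases h2 : coeff w q = 0
  · rw [h2, mul_zero]
  exfalso
  have h3 : Finsupp.weight ω v + Finsupp.weight ω w ≤ a + b :=
    add_le_add (hp v h1) (hq w h2)
  rw [← map_add, hvw] at h3
  exact absurd hu (not_lt.mpr h3)

lemma mul_aux {f g : MvPolynomial σ K} {u : σ →₀ ℕ}
    (hu : Finsupp.weight ω u = wdeg ω f + wdeg ω g) :
    coeff u (f * g) = coeff u (initialForm ω f * initialForm ω g) := by
  classical
  rw [coeff_mul, coeff_mul]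
  apply Finset.sum_congr rfl
  rintro ⟨v, w⟩ hvw
  rw [Finset.HasAntidiagonal.mem_antidiagonal] at hvw
  have hsum : Finsupp.weight ω v + Finsupp.weight ω w = wdeg ω f + wdeg ω g := by
    rw [← map_add, hvw, hu]
  rcases lt_trichotomy (Finsupp.weight ω v) (wdeg ω f) with hlt | heq | hgt
  · have h2 : wdeg ω g < Finsupp.weight ω w := by linarith
    rw [coeff_eq_zero_of_wdeg_lt h2, coeff_initialForm_of_weight_ne (ne_of_lt hlt),
      mul_zero, zero_mul]
  · have h2 : Finsupp.weight ω w = wdeg ω g := by linarith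
    rw [coeff_initialForm_of_weight_eq heq, coeff_initialForm_of_weight_eq h2]
  · rw [coeff_eq_zero_of_wdeg_lt hgt, coeff_initialForm_of_weight_ne (ne_of_gt hgt),
      zero_mul, zero_mul]

lemma wdeg_mul {f g : MvPolynomial σ K} (hf : f ≠ 0) (hg : g ≠ 0) :
    wdeg ω (f * g) = wdeg ω f + wdeg ω g := by
  have hin : initialForm ω f * initialForm ω g ≠ 0 :=
    mul_ne_zero (initialForm_ne_zero hf) (initialForm_ne_zero hg)
  have hhom : IsWeightedHomogeneous ω (initialForm ω f * initialForm ω g)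
      (wdeg ω f + wdeg ω g) :=
    (isWeightedHomogeneous_initialForm f).mul (isWeightedHomogeneous_initialForm g)
  obtain ⟨u, hu⟩ := ne_zero_iff.mp hin
  have hwu : Finsupp.weight ω u = wdeg ω f + wdeg ω g := hhom hu
  have hcu : coeff u (f * g) ≠ 0 := by rw [mul_aux hwu]; exact hu
  refine le_antisymm (wdeg_le (mul_ne_zero hf hg) ?_) (hwu ▸ le_wdeg (mem_support_iff.2 hcu))
  intro v hv
  by_contra hc
  exact hv (coeff_mul_eq_zero (fun _ h => le_wdeg (mem_support_iff.2 h))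
    (fun _ h => le_wdeg (mem_support_iff.2 h)) (not_le.1 hc))

lemma initialForm_mul {f g : MvPolynomial σ K} (hf : f ≠ 0) (hg : g ≠ 0) :
    initialForm ω (f * g) = initialForm ω f * initialForm ω g := by
  have hhom : IsWeightedHomogeneous ω (initialForm ω f * initialForm ω g)
      (wdeg ω f + wdeg ω g) :=
    (isWeightedHomogeneous_initialForm f).mul (isWeightedHomogeneous_initialForm g)
  have hdeg := wdeg_mul (ω := ω) hf hg
  ext v
  by_cases h : Finsupp.weight ω v = wdeg ω f + wdeg ω g
  · rw [coeff_initialForm_of_weight_eq (by rw [hdeg]; exact h), mul_aux h]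
  · rw [coeff_initialForm_of_weight_ne (by rw [hdeg]; exact h)]
    by_contra hc
    exact h (hhom fun hcc => hc hcc.symm)

lemma comp_mul_homogeneous {q r : MvPolynomial σ K} {e : ℤ} (δ : ℤ)
    (hr : IsWeightedHomogeneous ω r e) :
    weightedHomogeneousComponent ω δ (q * r) =
      weightedHomogeneousComponent ω (δ - e) q * r := by
  classical
  ext u
  rw [coeff_weightedHomogeneousComponent, coeff_mul, coeff_mul]
  simp only [coeff_weightedHomogeneousComponent]
  by_cases hu : Finsupp.weight ω u = δ
  · rw [if_pos hu]
    apply Finset.sum_congr rfl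
    rintro ⟨v, w⟩ hvw
    rw [Finset.HasAntidiagonal.mem_antidiagonal] at hvw
    by_cases h2 : coeff w r = 0
    · rw [h2, mul_zero, mul_zero]
    · have hw : Finsupp.weight ω w = e := hr h2
      have hv : Finsupp.weight ω v = δ - e := by
        have : Finsupp.weight ω v + Finsupp.weight ω w = δ := by rw [← map_add, hvw, hu]
        linarith
      rw [if_pos hv]
  · rw [if_neg hu]
    symm
    apply Finset.sum_eq_zero
    rintro ⟨v, w⟩ hvw
    rw [Finset.HasAntidiagonal.mem_antidiagonal] at hvw
    by_cases h2 : coeff w r = 0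
    · rw [h2, mul_zero]
    by_cases h3 : Finsupp.weight ω v = δ - e
    · exfalso
      apply hu
      have hw : Finsupp.weight ω w = e := hr h2
      rw [← hvw, map_add, h3, hw]
      ring
    · rw [if_neg h3, zero_mul]

lemma initialForm_mem {J : Ideal (MvPolynomial σ K)} {g : MvPolynomial σ K}
    (hg : g ∈ J) (h0 : g ≠ 0) : initialForm ω g ∈ initialIdeal ω J :=
  Ideal.subset_span ⟨g, hg, h0, rfl⟩

lemma initialIdeal_mono {J J' : Ideal (MvPolynomial σ K)} (h : J ≤ J') :
    initialIdeal ω J ≤ initialIdeal ω J' :=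
  Ideal.span_mono (fun p ⟨g, hg1, h0, he⟩ => ⟨g, h hg1, h0, he⟩)

lemma exists_of_mem_initialIdeal {J : Ideal (MvPolynomial σ K)}
    {p : MvPolynomial σ K} {δ : ℤ}
    (hp : p ∈ initialIdeal ω J) (hhom : IsWeightedHomogeneous ω p δ) (hp0 : p ≠ 0) :
    ∃ g ∈ J, g ≠ 0 ∧ initialForm ω g = p := by
  classical
  obtain ⟨n, c, s, hsum⟩ := Submodule.mem_span_set'.mp hp
  choose g hgJ hg0 hgs using fun i => (s i).2
  set A : Fin n → MvPolynomial σ K :=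
    fun i => weightedHomogeneousComponent ω (δ - wdeg ω (g i)) (c i) with hA
  set G : MvPolynomial σ K := ∑ i, A i * g i with hG
  have hGJ : G ∈ J := Ideal.sum_mem _ fun i _ => Ideal.mul_mem_left _ _ (hgJ i)
  have hterm : ∀ i, weightedHomogeneousComponent ω δ (A i * g i) = A i * initialForm ω (g i) := by
    intro i
    rw [mul_comm (A i) (g i),
      comp_mul_homogeneous δ (weightedHomogeneousComponent_isWeightedHomogeneous _ _),
      sub_sub_cancel, ← initialForm_eq, mul_comm]
  have hcomp : weightedHomogeneousComponent ω δ G = p := by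
    rw [hG, map_sum]
    have h2 : ∀ i : Fin n, weightedHomogeneousComponent ω δ (c i • (s i : MvPolynomial σ K))
        = A i * initialForm ω (g i) := by
      intro i
      have hs : IsWeightedHomogeneous ω (s i : MvPolynomial σ K) (wdeg ω (g i)) := by
        rw [hgs i]; exact isWeightedHomogeneous_initialForm _
      rw [smul_eq_mul, comp_mul_homogeneous δ hs, hgs i]
    calc (∑ i, weightedHomogeneousComponent ω δ (A i * g i))
        = ∑ i, weightedHomogeneousComponent ω δ (c i • (s i : MvPolynomial σ K)) := by
          apply Finset.sum_congr rfl
          intro i _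
          rw [hterm i, h2 i]
      _ = weightedHomogeneousComponent ω δ (∑ i, c i • (s i : MvPolynomial σ K)) :=
          (map_sum _ _ _).symm
      _ = p := by rw [hsum, hhom.weightedHomogeneousComponent_same]
  have hbd : ∀ u, coeff u G ≠ 0 → Finsupp.weight ω u ≤ δ := by
    intro u hu
    by_contra hc
    apply hu
    rw [hG, coeff_sum]
    apply Finset.sum_eq_zero
    intro i _
    exact coeff_mul_eq_zero
      (a := δ - wdeg ω (g i)) (b := wdeg ω (g i))
      (fun v hv => le_of_eq (weightedHomogeneousComponent_isWeightedHomogeneous _ _ hv))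
      (fun w hw => le_wdeg (mem_support_iff.2 hw))
      (by rw [sub_add_cancel]; exact not_le.1 hc)
  have hG0 : G ≠ 0 := by
    intro h
    rw [h, map_zero] at hcomp
    exact hp0 hcomp.symm
  obtain ⟨u, hu⟩ := ne_zero_iff.mp hp0
  have hwu : Finsupp.weight ω u = δ := hhom hu
  have hcu : coeff u G ≠ 0 := by
    intro h
    apply hu
    rw [← hcomp]
    classical
    rw [coeff_weightedHomogeneousComponent, if_pos hwu, h]
  have hwdeg : wdeg ω G = δ :=
    le_antisymm (wdeg_le hG0 hbd) (hwu ▸ le_wdeg (mem_support_iff.2 hcu))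
  exact ⟨G, hGJ, hG0, by rw [initialForm_eq, hwdeg, hcomp]⟩

lemma wdeg_eq_wdeg {h g : MvPolynomial σ K} (hg : g ≠ 0)
    (hin : initialForm ω g = initialForm ω h) : wdeg ω g = wdeg ω h := by
  obtain ⟨u, hu⟩ := ne_zero_iff.mp (initialForm_ne_zero (ω := ω) hg)
  have h1 := isWeightedHomogeneous_initialForm (ω := ω) g hu
  have h2 := isWeightedHomogeneous_initialForm (ω := ω) h (by rw [← hin]; exact hu)
  rw [← h1, ← h2]

lemma coeff_sub_eq_zero {h g : MvPolynomial σ K} (hg : g ≠ 0)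
    (hin : initialForm ω g = initialForm ω h) {u : σ →₀ ℕ}
    (hu : wdeg ω h ≤ Finsupp.weight ω u) : coeff u (h - g) = 0 := by
  have hdeq := wdeg_eq_wdeg hg hin
  rcases eq_or_lt_of_le hu with heq | hlt
  · rw [coeff_sub, ← coeff_initialForm_of_weight_eq heq.symm,
      ← coeff_initialForm_of_weight_eq (u := u) (g := g) (by rw [hdeq, ← heq]),
      hin, sub_self]
  · rw [coeff_sub, coeff_eq_zero_of_wdeg_lt hlt,
      coeff_eq_zero_of_wdeg_lt (by rw [hdeq]; exact hlt), sub_self]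

lemma wdeg_sub_lt {h g : MvPolynomial σ K} (hg : g ≠ 0)
    (hin : initialForm ω g = initialForm ω h) (hne : h - g ≠ 0) :
    wdeg ω (h - g) < wdeg ω h := by
  have hb : wdeg ω (h - g) ≤ wdeg ω h - 1 := by
    apply wdeg_le hne
    intro u hu
    by_contra hc
    exact hu (coeff_sub_eq_zero hg hin (by linarith [not_le.1 hc]))
  linarith

lemma weight_nonneg (hω : ∀ i, 0 < ω i) (u : σ →₀ ℕ) : 0 ≤ Finsupp.weight ω u := by
  rw [Finsupp.weight_apply]
  apply Finset.sum_nonneg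
  intro i _
  exact nsmul_nonneg (le_of_lt (hω i)) _

lemma wdeg_nonneg (hω : ∀ i, 0 < ω i) (g : MvPolynomial σ K) : 0 ≤ wdeg ω g := by
  rcases eq_or_ne g 0 with rfl | hg
  · rw [wdeg, dif_neg (by simp)]
  · obtain ⟨u, _, he⟩ := exists_wdeg (ω := ω) hg
    exact he ▸ weight_nonneg hω u

lemma comp_eq_zero_of_wdeg_lt {g : MvPolynomial σ K} {m : ℤ} (h : wdeg ω g < m) :
    weightedHomogeneousComponent ω m g = 0 :=
  weightedHomogeneousComponent_eq_zero' _ _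
    fun d hd => ne_of_lt (lt_of_le_of_lt (le_wdeg hd) h)

lemma comp_mem_cases (p : MvPolynomial σ K) {m : ℤ} (hle : wdeg ω p ≤ m) :
    weightedHomogeneousComponent ω m p = 0 ∨
      weightedHomogeneousComponent ω m p = initialForm ω p := by
  rcases eq_or_lt_of_le hle with heq | hlt
  · right; rw [initialForm_eq, heq]
  · left; exact comp_eq_zero_of_wdeg_lt hlt

lemma mem_of_mul_mem (hω : ∀ i, 0 < ω i) {J : Ideal (MvPolynomial σ K)}
    {f : MvPolynomial σ K} (hf : f ≠ 0)
    (hr : ∀ p, initialForm ω f * p ∈ initialIdeal ω J → p ∈ initialIdeal ω J) :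
    ∀ h, f * h ∈ J → h ∈ J := by
  suffices H : ∀ n : ℕ, ∀ h : MvPolynomial σ K, (wdeg ω h).toNat = n → f * h ∈ J → h ∈ J by
    intro h hh; exact H _ h rfl hh
  intro n
  induction n using Nat.strong_induction_on with
  | _ n IH =>
    intro h hn hfh
    rcases eq_or_ne h 0 with rfl | hh0
    · exact J.zero_mem
    have hin : initialForm ω h ∈ initialIdeal ω J := by
      apply hr
      rw [← initialForm_mul hf hh0]
      exact initialForm_mem hfh (mul_ne_zero hf hh0)
    obtain ⟨g, hgJ, hg0, hgin⟩ := exists_of_mem_initialIdeal hin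
      (isWeightedHomogeneous_initialForm h) (initialForm_ne_zero hh0)
    rcases eq_or_ne (h - g) 0 with he | hne
    · rw [← sub_eq_zero.mp he] at hgJ; exact hgJ
    · have hlt : wdeg ω (h - g) < wdeg ω h := wdeg_sub_lt hg0 hgin hne
      have hlt' : (wdeg ω (h - g)).toNat < n := by
        have h1 := wdeg_nonneg hω (h - g)
        omega
      have hmem : h - g ∈ J := IH _ hlt' (h - g) rfl
        (by rw [mul_sub]; exact J.sub_mem hfh (J.mul_mem_left f hgJ))
      have := J.add_mem hmem hgJ
      rwa [sub_add_cancel] at this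

lemma initialIdeal_sup (hω : ∀ i, 0 < ω i) {J : Ideal (MvPolynomial σ K)}
    {f : MvPolynomial σ K} (hf : f ≠ 0)
    (hr : ∀ p, initialForm ω f * p ∈ initialIdeal ω J → p ∈ initialIdeal ω J) :
    initialIdeal ω (J ⊔ Ideal.span {f}) =
      initialIdeal ω J ⊔ Ideal.span {initialForm ω f} := by
  apply le_antisymm
  · rw [initialIdeal, Ideal.span_le]
    rintro p ⟨g, hg, hg0, rfl⟩
    show initialForm ω g ∈ initialIdeal ω J ⊔ Ideal.span {initialForm ω f}
    -- write g = a + b * f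
    obtain ⟨a, ha, c, hc, hac⟩ := Submodule.mem_sup.mp hg
    obtain ⟨b, hb⟩ := Ideal.mem_span_singleton'.mp hc
    have hgab : g = a + b * f := by rw [← hac, hb]
    clear hac hb hc hg c
    -- strong induction on the measure
    suffices H : ∀ n : ℕ, ∀ g a b : MvPolynomial σ K, g ≠ 0 → a ∈ J → g = a + b * f →
        (max (wdeg ω a) (wdeg ω (b * f))).toNat = n →
        initialForm ω g ∈ initialIdeal ω J ⊔ Ideal.span {initialForm ω f} by
      exact H _ g a b hg0 ha hgab rfl
    clear hgab ha hg0 g a b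
    intro n
    induction n using Nat.strong_induction_on with
    | _ n IH =>
      intro g a b hg0 ha hgab hn
      rcases eq_or_ne b 0 with rfl | hb0
      · rw [zero_mul, add_zero] at hgab
        exact Ideal.mem_sup_left (initialForm_mem (hgab ▸ ha) hg0)
      rcases eq_or_ne a 0 with rfl | ha0
      · rw [zero_add] at hgab
        subst hgab
        rw [initialForm_mul hb0 hf]
        exact Ideal.mem_sup_right
          (Ideal.mem_span_singleton.mpr (dvd_mul_left _ _))
      have hbf0 : b * f ≠ 0 := mul_ne_zero hb0 hf
      set m : ℤ := max (wdeg ω a) (wdeg ω (b * f)) with hm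
      have hga : ∀ u, coeff u g ≠ 0 → Finsupp.weight ω u ≤ m := by
        intro u hu
        rw [hgab, coeff_add] at hu
        by_cases h1 : coeff u a = 0
        · have h2 : coeff u (b * f) ≠ 0 := by
            intro h; rw [h1, h, add_zero] at hu; exact hu rfl
          exact le_trans (le_wdeg (mem_support_iff.2 h2)) (le_max_right _ _)
        · exact le_trans (le_wdeg (mem_support_iff.2 h1)) (le_max_left _ _)
      have hδm : wdeg ω g ≤ m := wdeg_le hg0 hga
      have hsplit : ∀ k : ℤ, weightedHomogeneousComponent ω k g =
          weightedHomogeneousComponent ω k a + weightedHomogeneousComponent ω k (b * f) := by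
        intro k; rw [hgab, map_add]
      rcases eq_or_lt_of_le hδm with hδeq | hδlt
      · -- top case: no cancellation
        have hA := comp_mem_cases (ω := ω) a (le_trans (le_max_left _ _) hδeq.ge)
        have hB := comp_mem_cases (ω := ω) (b * f) (le_trans (le_max_right _ _) hδeq.ge)
        have hini : initialForm ω g =
            weightedHomogeneousComponent ω (wdeg ω g) a +
            weightedHomogeneousComponent ω (wdeg ω g) (b * f) := by
          rw [initialForm_eq, hsplit]
        rw [hδeq] at hini hA hB
        have h1 : weightedHomogeneousComponent ω m a ∈ initialIdeal ω J := by
          rcases hA with h | h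
          · rw [h]; exact Ideal.zero_mem _
          · rw [h]; exact initialForm_mem ha ha0
        have h2 : weightedHomogeneousComponent ω m (b * f) ∈
            Ideal.span {initialForm ω f} := by
          rcases hB with h | h
          · rw [h]; exact Ideal.zero_mem _
          · rw [h, initialForm_mul hb0 hf]
            exact Ideal.mem_span_singleton.mpr (dvd_mul_left _ _)
        rw [hini]
        exact Submodule.add_mem _ (Ideal.mem_sup_left h1) (Ideal.mem_sup_right h2)
      · -- cancellation case
        have hcompg : weightedHomogeneousComponent ω m g = 0 := comp_eq_zero_of_wdeg_lt hδlt
        have hcancel : weightedHomogeneousComponent ω m a +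
            weightedHomogeneousComponent ω m (b * f) = 0 := by
          rw [← hsplit, hcompg]
        have hwa : wdeg ω a = m := by
          by_contra hc
          have h1 : wdeg ω a < m := lt_of_le_of_ne (le_max_left _ _) hc
          have h2 : wdeg ω (b * f) = m := by
            rcases max_choice (wdeg ω a) (wdeg ω (b * f)) with h | h
            · exact absurd (hm.trans h).symm hc
            · exact (hm.trans h).symm
          rw [comp_eq_zero_of_wdeg_lt h1, zero_add, ← h2, ← initialForm_eq] at hcancel
          exact initialForm_ne_zero hbf0 hcancel
        have hwbf : wdeg ω (b * f) = m := by
          by_contra hc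
          have h1 : wdeg ω (b * f) < m := lt_of_le_of_ne (le_max_right _ _) hc
          rw [comp_eq_zero_of_wdeg_lt h1, add_zero, ← hwa, ← initialForm_eq] at hcancel
          exact initialForm_ne_zero ha0 hcancel
        have htop : initialForm ω a + initialForm ω b * initialForm ω f = 0 := by
          rw [← initialForm_mul hb0 hf]
          rw [initialForm_eq, initialForm_eq, hwa, hwbf]
          exact hcancel
        have hbfmem : initialForm ω b * initialForm ω f ∈ initialIdeal ω J := by
          have : initialForm ω b * initialForm ω f = -initialForm ω a := by
            linear_combination htop
          rw [this]
          exact Submodule.neg_mem _ (initialForm_mem ha ha0)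
        have hbmem : initialForm ω b ∈ initialIdeal ω J := by
          apply hr
          rw [mul_comm]
          exact hbfmem
        obtain ⟨a', ha'J, ha'0, ha'in⟩ := exists_of_mem_initialIdeal hbmem
          (isWeightedHomogeneous_initialForm b) (initialForm_ne_zero hb0)
        have hwa' : wdeg ω a' = wdeg ω b := wdeg_eq_wdeg ha'0 ha'in
        set b' : MvPolynomial σ K := b - a' with hb'
        set a'' : MvPolynomial σ K := a + a' * f with ha''
        have ha''J : a'' ∈ J := J.add_mem ha (J.mul_mem_right f ha'J)
        have hrep : g = a'' + b' * f := by rw [hgab, ha'', hb']; ring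
        rcases eq_or_ne b' 0 with hb'0 | hb'0
        · rw [hb'0, zero_mul, add_zero] at hrep
          exact Ideal.mem_sup_left (initialForm_mem (hrep ▸ ha''J) hg0)
        rcases eq_or_ne a'' 0 with ha''0 | ha''0
        · rw [ha''0, zero_add] at hrep
          rw [hrep, initialForm_mul hb'0 hf]
          exact Ideal.mem_sup_right
            (Ideal.mem_span_singleton.mpr (dvd_mul_left _ _))
        -- both nonzero: measure decreases
        have hwb' : wdeg ω (b' * f) < m := by
          rw [wdeg_mul hb'0 hf, ← hwbf, wdeg_mul hb0 hf]
          have := wdeg_sub_lt ha'0 ha'in hb'0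
          linarith
        have ha'f0 : a' * f ≠ 0 := mul_ne_zero ha'0 hf
        have hwa'' : wdeg ω a'' < m := by
          have hbound : ∀ u, coeff u a'' ≠ 0 → Finsupp.weight ω u ≤ m - 1 := by
            intro u hu
            by_contra hc
            apply hu
            have hum : m ≤ Finsupp.weight ω u := by linarith [not_le.1 hc]
            rw [ha'', coeff_add]
            rcases eq_or_lt_of_le hum with hue | hul
            · -- weight u = m : top coefficients cancel
              have hca : coeff u a = coeff u (initialForm ω a) :=
                (coeff_initialForm_of_weight_eq (by rw [← hue, hwa])).symm
              have hwa'f : wdeg ω (a' * f) = m := by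
                rw [wdeg_mul ha'0 hf, hwa', ← wdeg_mul hb0 hf]
                exact hwbf
              have hcaf : coeff u (a' * f) = coeff u (initialForm ω (a' * f)) :=
                (coeff_initialForm_of_weight_eq (by rw [← hue, hwa'f])).symm
              rw [hca, hcaf, initialForm_mul ha'0 hf, ha'in]
              have hneg : initialForm ω b * initialForm ω f = -initialForm ω a := by
                linear_combination htop
              rw [hneg, coeff_neg]
              ring
            · rw [coeff_eq_zero_of_wdeg_lt (by rw [hwa]; exact hul),
                coeff_eq_zero_of_wdeg_lt (by
                  rw [wdeg_mul ha'0 hf, hwa', ← wdeg_mul hb0 hf, hwbf]; exact hul),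
                add_zero]
          have := wdeg_le ha''0 hbound
          linarith
        have hmeas : (max (wdeg ω a'') (wdeg ω (b' * f))).toNat < n := by
          have h0 : (0:ℤ) ≤ max (wdeg ω a'') (wdeg ω (b' * f)) :=
            le_trans (wdeg_nonneg hω a'') (le_max_left _ _)
          have h1 : max (wdeg ω a'') (wdeg ω (b' * f)) < m := max_lt hwa'' hwb'
          rw [← hn]
          exact (Int.toNat_lt_toNat (lt_of_le_of_lt h0 h1)).mpr h1
        exact IH _ hmeas g a'' b' hg0 ha''J hrep rfl
  · apply sup_le
    · exact initialIdeal_mono le_sup_left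
    · rw [Ideal.span_le]
      rintro p hp
      rw [Set.mem_singleton_iff] at hp
      subst hp
      exact initialForm_mem (Ideal.mem_sup_right (Ideal.mem_span_singleton_self f)) hf

open Pointwise

section Quot

variable (J : Ideal (MvPolynomial σ K)) (r : MvPolynomial σ K)

lemma isSMulRegular_quot_iff :
    IsSMulRegular (MvPolynomial σ K ⧸ J) r ↔ ∀ h, r * h ∈ J → h ∈ J := by
  constructor
  · intro h p hp
    have h0 : r • (Submodule.Quotient.mk p : MvPolynomial σ K ⧸ J) = r • (0 : MvPolynomial σ K ⧸ J) := by
      rw [smul_zero, ← Submodule.Quotient.mk_smul, smul_eq_mul]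
      rw [show ((Submodule.Quotient.mk (r * p) : MvPolynomial σ K ⧸ J)) = 0 ↔ r * p ∈ J from
        Submodule.Quotient.mk_eq_zero J]
      exact hp
    have := h h0
    rwa [show ((Submodule.Quotient.mk p : MvPolynomial σ K ⧸ J)) = 0 ↔ p ∈ J from
      Submodule.Quotient.mk_eq_zero J] at this
  · intro h a b hab
    obtain ⟨x, rfl⟩ := Submodule.Quotient.mk_surjective J a
    obtain ⟨y, rfl⟩ := Submodule.Quotient.mk_surjective J b
    replace hab : r • (Submodule.Quotient.mk x : MvPolynomial σ K ⧸ J) =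
        r • (Submodule.Quotient.mk y : MvPolynomial σ K ⧸ J) := hab
    rw [← Submodule.Quotient.mk_smul, ← Submodule.Quotient.mk_smul,
      Submodule.Quotient.eq] at hab
    rw [Submodule.Quotient.eq]
    apply h
    have he : r * (x - y) = r • x - r • y := by
      rw [smul_eq_mul, smul_eq_mul]; ring
    rw [he]
    exact hab

lemma smul_top_eq_span :
    r • (⊤ : Submodule (MvPolynomial σ K) (MvPolynomial σ K)) = Ideal.span {r} := by
  rw [← Submodule.singleton_set_smul, Submodule.set_smul_top_eq_span]

/-- `(S/J) / r(S/J) ≅ S / (J + (r))` as `S`-modules. -/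
noncomputable def quotEquiv :
    QuotSMulTop r (MvPolynomial σ K ⧸ J) ≃ₗ[MvPolynomial σ K]
      MvPolynomial σ K ⧸ (J ⊔ Ideal.span {r}) :=
  (Submodule.quotEquivOfEq _ _ (by
      rw [Submodule.map_pointwise_smul, Submodule.map_top, Submodule.range_mkQ])) ≪≫ₗ
    (Submodule.quotientQuotientEquivQuotientSup (J : Submodule (MvPolynomial σ K) (MvPolynomial σ K))
      (r • ⊤)) ≪≫ₗ
    (Submodule.quotEquivOfEq _ _ (by rw [smul_top_eq_span]))

end Quot

open RingTheory.Sequence in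
lemma main (hω : ∀ i, 0 < ω i) :
    ∀ (d : ℕ) (J : Ideal (MvPolynomial σ K)) (f : Fin d → MvPolynomial σ K),
      (∀ i, f i ≠ 0) →
      IsRegular (MvPolynomial σ K ⧸ initialIdeal ω J)
        (List.ofFn fun i => initialForm ω (f i)) →
      IsRegular (MvPolynomial σ K ⧸ J) (List.ofFn f) := by
  intro d
  induction d with
  | zero =>
    intro J f _ hreg
    rw [List.ofFn_zero] at hreg ⊢
    have h1 : initialIdeal ω J ≠ ⊤ := by
      intro h
      apply hreg.top_ne_smul
      have : Subsingleton (MvPolynomial σ K ⧸ initialIdeal ω J) :=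
        Submodule.Quotient.subsingleton_iff.mpr h
      exact Subsingleton.elim _ _
    have h2 : J ≠ ⊤ := by
      intro h
      apply h1
      rw [Ideal.eq_top_iff_one] at h ⊢
      have := initialForm_mem (ω := ω) h one_ne_zero
      rwa [initialForm_one] at this
    have : Nontrivial (MvPolynomial σ K ⧸ J) := Ideal.Quotient.nontrivial_iff.mpr h2
    exact IsRegular.nil _ _
  | succ d IH =>
    intro J f hf hreg
    rw [List.ofFn_succ] at hreg ⊢
    rw [isRegular_cons_iff] at hreg ⊢
    obtain ⟨h1, h2⟩ := hreg
    have hfr : ∀ p, initialForm ω (f 0) * p ∈ initialIdeal ω J → p ∈ initialIdeal ω J :=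
      (isSMulRegular_quot_iff _ _).mp h1
    constructor
    · exact (isSMulRegular_quot_iff _ _).mpr (mem_of_mul_mem hω (hf 0) hfr)
    · rw [(quotEquiv (initialIdeal ω J) (initialForm ω (f 0))).isRegular_congr] at h2
      rw [← initialIdeal_sup hω (hf 0) hfr] at h2
      have h3 := IH (J ⊔ Ideal.span {f 0}) (fun i => f i.succ) (fun i => hf _) h2
      exact ((quotEquiv J (f 0)).isRegular_congr _).mpr h3

end InW

theorem stmt18 (K : Type) [Field K] (σ : Type) [Finite σ]
    (ω : σ → ℤ) (hω : ∀ i, 0 < ω i)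
    (I : Ideal (MvPolynomial σ K))
    -- `I` is homogeneous with respect to the standard grading by total degree:
    (hI : ∀ g ∈ I, ∀ n : ℕ, homogeneousComponent n g ∈ I)
    (d : ℕ) (f : Fin d → MvPolynomial σ K) (hf : ∀ i, f i ≠ 0)
    (hreg : RingTheory.Sequence.IsRegular
      (MvPolynomial σ K ⧸ initialIdeal ω I)
      (List.ofFn fun i => initialForm ω (f i))) :
    RingTheory.Sequence.IsRegular (MvPolynomial σ K ⧸ I) (List.ofFn f) :=
  InW.main hω d I f hf hreg
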